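/- If (β₀*, β*) is an optimal solution of the SLTS problem min (1/4)·T_h(y − β₀·1 − Xβ) + λ‖β‖₁, then (β₀*, β*, α*) with α* any element of prox_{(1/2)T_h}(y − β₀*·1 − Xβ*) is an optimal solution of the STRLS problem min (1/2)‖y − β₀·1 − Xβ − α‖₂² + (1/2)T_h(α) + λ‖β‖₁. -/

import Mathlib

/-- Trimmed squares function. -/
noncomputable def Th (n h : ℕ) (r : Fin n → ℝ) : ℝ :=
  sInf {s : ℝ | ∃ Λ : Finset (Fin n), Λ.card = h ∧ s = ∑ i ∈ Λ, r i ^ 2}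

lemma Th_set_finite (n h : ℕ) (r : Fin n → ℝ) :
    {s : ℝ | ∃ Λ : Finset (Fin n), Λ.card = h ∧ s = ∑ i ∈ Λ, r i ^ 2}.Finite := by
  apply Set.Finite.subset (Set.finite_range (fun Λ : Finset (Fin n) => ∑ i ∈ Λ, r i ^ 2))
  rintro s ⟨Λ, _, rfl⟩; exact ⟨Λ, rfl⟩

lemma Th_le (n h : ℕ) (r : Fin n → ℝ) (Λ : Finset (Fin n)) (hΛ : Λ.card = h) :
    Th n h r ≤ ∑ i ∈ Λ, r i ^ 2 :=
  csInf_le (Th_set_finite n h r).bddBelow ⟨Λ, hΛ, rfl⟩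

lemma Th_exists (n h : ℕ) (hhn : h ≤ n) (r : Fin n → ℝ) :
    ∃ Λ : Finset (Fin n), Λ.card = h ∧ Th n h r = ∑ i ∈ Λ, r i ^ 2 := by
  have hne : {s : ℝ | ∃ Λ : Finset (Fin n), Λ.card = h ∧ s = ∑ i ∈ Λ, r i ^ 2}.Nonempty := by
    obtain ⟨Λ, -, hΛ⟩ := Finset.exists_subset_card_eq (s := (Finset.univ : Finset (Fin n))) (n := h)
      (by simpa using hhn)
    exact ⟨_, Λ, hΛ, rfl⟩
  exact hne.csInf_mem (Th_set_finite n h r)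

/-- an optimal solution of SLTS together with a prox point of (1/2)T_h
at the residual is optimal for STRLS. -/
theorem stmt_4 (n d h : ℕ) (hh : 1 ≤ h) (hhn : h ≤ n)
    (y : Fin n → ℝ) (X : Matrix (Fin n) (Fin d) ℝ) (lam : ℝ) (hlam : 0 < lam)
    (F : ℝ → (Fin d → ℝ) → ℝ)
    (hF : F = fun β₀ β =>
      (1 / 4) * Th n h (fun i => y i - β₀ - X.mulVec β i) + lam * ∑ j, |β j|)
    (L : ℝ → (Fin d → ℝ) → (Fin n → ℝ) → ℝ)
    (hL : L = fun β₀ β α =>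
      (1 / 2) * ∑ i, (y i - β₀ - X.mulVec β i - α i) ^ 2 + (1 / 2) * Th n h α
        + lam * ∑ j, |β j|)
    (β₀s : ℝ) (βs : Fin d → ℝ)
    (hopt : ∀ (β₀ : ℝ) (β : Fin d → ℝ), F β₀s βs ≤ F β₀ β)
    (αs : Fin n → ℝ)
    (hprox : ∀ α : Fin n → ℝ,
      (1 / 2) * Th n h αs + (1 / 2) * ∑ i, (αs i - (y i - β₀s - X.mulVec βs i)) ^ 2 ≤
        (1 / 2) * Th n h α + (1 / 2) * ∑ i, (α i - (y i - β₀s - X.mulVec βs i)) ^ 2) :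
    ∀ (β₀ : ℝ) (β : Fin d → ℝ) (α : Fin n → ℝ), L β₀s βs αs ≤ L β₀ β α := by
  intro β₀ β α
  -- Lower bound: F β₀ β ≤ L β₀ β α
  have lower : ∀ (b₀ : ℝ) (b : Fin d → ℝ) (a : Fin n → ℝ), F b₀ b ≤ L b₀ b a := by
    intro b₀ b a
    set r : Fin n → ℝ := fun i => y i - b₀ - X.mulVec b i with hr
    obtain ⟨Λ, hΛ, hTa⟩ := Th_exists n h hhn a
    have h1 : Th n h r ≤ ∑ i ∈ Λ, r i ^ 2 := Th_le n h r Λ hΛ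
    have h2 : ∑ i ∈ Λ, (r i - a i) ^ 2 ≤ ∑ i : Fin n, (r i - a i) ^ 2 :=
      Finset.sum_le_sum_of_subset_of_nonneg (Finset.subset_univ Λ)
        (fun i _ _ => sq_nonneg _)
    have h3 : (1 / 4 : ℝ) * ∑ i ∈ Λ, r i ^ 2 ≤
        (1 / 2) * ∑ i ∈ Λ, (r i - a i) ^ 2 + (1 / 2) * ∑ i ∈ Λ, a i ^ 2 := by
      rw [Finset.mul_sum, Finset.mul_sum, Finset.mul_sum, ← Finset.sum_add_distrib]
      apply Finset.sum_le_sum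
      intro i _
      have hid : 1 / 2 * (r i - a i) ^ 2 + 1 / 2 * a i ^ 2 - 1 / 4 * r i ^ 2
          = 1 / 4 * (2 * a i - r i) ^ 2 := by ring
      nlinarith [sq_nonneg (2 * a i - r i), hid]
    rw [hF, hL]
    simp only [← hr]
    rw [hTa]
    nlinarith [h1, h2, h3]
  -- Upper bound: L β₀s βs αs ≤ F β₀s βs
  have upper : L β₀s βs αs ≤ F β₀s βs := by
    set r : Fin n → ℝ := fun i => y i - β₀s - X.mulVec βs i with hr
    obtain ⟨Λ, hΛ, hTr⟩ := Th_exists n h hhn r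
    set a' : Fin n → ℝ := fun i => if i ∈ Λ then r i / 2 else r i with ha'
    have hTa' : Th n h a' ≤ ∑ i ∈ Λ, (r i / 2) ^ 2 := by
      have := Th_le n h a' Λ hΛ
      calc Th n h a' ≤ ∑ i ∈ Λ, a' i ^ 2 := this
        _ = ∑ i ∈ Λ, (r i / 2) ^ 2 := by
            apply Finset.sum_congr rfl; intro i hi; simp [ha', hi]
    have hdist : ∑ i : Fin n, (a' i - r i) ^ 2 = ∑ i ∈ Λ, (r i / 2) ^ 2 := by
      rw [← Finset.sum_subset (Finset.subset_univ Λ)]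
      · apply Finset.sum_congr rfl; intro i hi; simp only [ha']; rw [if_pos hi]; ring
      · intro i _ hi; simp only [ha']; rw [if_neg hi]; simp
    have hp := hprox a'
    change (1 / 2) * Th n h αs + (1 / 2) * ∑ i, (αs i - r i) ^ 2 ≤
      (1 / 2) * Th n h a' + (1 / 2) * ∑ i, (a' i - r i) ^ 2 at hp
    rw [hdist] at hp
    have key : (1 / 2 : ℝ) * Th n h αs + (1 / 2) * ∑ i, (αs i - r i) ^ 2 ≤
        (1 / 4) * Th n h r := by
      calc (1 / 2 : ℝ) * Th n h αs + (1 / 2) * ∑ i, (αs i - r i) ^ 2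
          ≤ (1 / 2) * Th n h a' + (1 / 2) * ∑ i ∈ Λ, (r i / 2) ^ 2 := hp
        _ ≤ (1 / 2) * ∑ i ∈ Λ, (r i / 2) ^ 2 + (1 / 2) * ∑ i ∈ Λ, (r i / 2) ^ 2 := by
            linarith [hTa']
        _ = (1 / 4) * ∑ i ∈ Λ, r i ^ 2 := by
            have hS : ∑ i ∈ Λ, (r i / 2) ^ 2 = (1 / 4) * ∑ i ∈ Λ, r i ^ 2 := by
              rw [Finset.mul_sum]
              exact Finset.sum_congr rfl fun i _ => by ring
            rw [hS]; ring
        _ = (1 / 4) * Th n h r := by rw [hTr]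
    have hsq : ∑ i : Fin n, (r i - αs i) ^ 2 = ∑ i : Fin n, (αs i - r i) ^ 2 := by
      apply Finset.sum_congr rfl; intro i _; ring
    rw [hF, hL]
    simp only [← hr]
    rw [hsq]
    linarith [key]
  exact le_trans (le_trans upper (hopt β₀ β)) (lower β₀ β α)
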